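/- Suppose (W,S) is a Coxeter system of type Λ, α is a link of dimension r ≥ 2, and σ ∈ [α] is such that both ⟦2r−3,2r−1⟧ and ⟦2r−1,2r+1⟧ are braid shadows of σ. Then sigbar_r(σ) and sigbar_r(b^r(σ)) are convex subsets of the vertices of the braid graph B(α). -/

import Mathlib

open scoped Classical

namespace Braid

variable {B : Type*}

/-- A Coxeter matrix is *simply laced* if all of its entries are 1, 2 or 3
(in particular, no entry is `0`, which encodes `m(s,t) = ∞`). -/
def SimplyLaced (M : CoxeterMatrix B) : Prop := ∀ s t : B, 1 ≤ M s t ∧ M s t ≤ 3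

/-- The Coxeter graph has an edge between `s` and `t` iff `m(s,t) ≥ 3`
(where the entry `0` encodes `∞`). -/
def CoxEdge (M : CoxeterMatrix B) (s t : B) : Prop := M s t = 0 ∨ 3 ≤ M s t

/-- A Coxeter matrix is *triangle free* if its Coxeter graph contains no three-cycles. -/
def TriangleFree (M : CoxeterMatrix B) : Prop :=
  ∀ s t u : B, ¬ (CoxEdge M s t ∧ CoxEdge M t u ∧ CoxEdge M s u)

/-- A Coxeter system is of *type Λ* if it is simply laced and triangle free. -/
def TypeLambda (M : CoxeterMatrix B) : Prop := SimplyLaced M ∧ TriangleFree M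

/-- `y` is obtained from `x` by replacing the factor `s t s` occupying the (0-based)
positions `p, p+1, p+2` by `t s t`, where `m(s,t) = 3`. -/
def BraidMoveAt (M : CoxeterMatrix B) (x y : List B) (p : ℕ) : Prop :=
  ∃ s t : B, M s t = 3 ∧
    x = x.take p ++ [s, t, s] ++ x.drop (p + 3) ∧
    y = x.take p ++ [t, s, t] ++ x.drop (p + 3)

/-- `x` and `y` differ by a single braid move (applied to `x`). -/
def BraidMove (M : CoxeterMatrix B) (x y : List B) : Prop := ∃ p, BraidMoveAt M x y p

/-- Two words are *braid equivalent* if one is obtained from the other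
by a sequence of braid moves. -/
def BraidEquiv (M : CoxeterMatrix B) : List B → List B → Prop :=
  Relation.ReflTransGen (BraidMove M)

/-- The braid class of `α`. -/
def braidClass (M : CoxeterMatrix B) (α : List B) : Set (List B) := {x | BraidEquiv M α x}

/-- The braid graph of `α`: vertices are the members of the braid class of `α`, with two
vertices adjacent iff they differ by a single braid move. -/
def braidGraph (M : CoxeterMatrix B) (α : List B) : SimpleGraph (braidClass M α) :=
  SimpleGraph.fromRel (fun x y => BraidMove M x.1 y.1)

/-- `c` is the (1-based) center of a braid shadow of `β`; that is, the interval of 1-based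
positions `⟦c-1, c+1⟧` is a braid shadow of `β`. -/
def ShadowCenter (M : CoxeterMatrix B) (β : List B) (c : ℕ) : Prop :=
  2 ≤ c ∧ ∃ s t : B, M s t = 3 ∧ β = β.take (c - 2) ++ [s, t, s] ++ β.drop (c + 1)

/-- The set of (1-based) centers of the braid shadows of the braid class `[α]`. -/
def classCenters (M : CoxeterMatrix B) (α : List B) : Set ℕ :=
  {c | ∃ β ∈ braidClass M α, ShadowCenter M β c}

/-- The dimension of `α`: the number of braid shadows of `[α]`. -/
noncomputable def braidDim (M : CoxeterMatrix B) (α : List B) : ℕ :=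
  (classCenters M α).ncard

/-- The (1-based) center of the `i`-th braid shadow of `[α]`, the braid shadows being
numbered `1, …, braidDim M α` from left to right. -/
noncomputable def nthCenter (M : CoxeterMatrix B) (α : List B) (i : ℕ) : ℕ :=
  Nat.nth (· ∈ classCenters M α) (i - 1)

/-- The `i`-th entry of the signature of `x ∈ [α]`: the letter of `x` appearing in the
center of the `i`-th braid shadow of `[α]`. -/
noncomputable def sig (M : CoxeterMatrix B) (α x : List B) (i : ℕ) : Option B :=
  x[nthCenter M α i - 1]?

/-- `sigbar M α x i` is the set of members of `[α]` whose signature agrees with that of `x`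
in position `i`. -/
noncomputable def sigbar (M : CoxeterMatrix B) (α x : List B) (i : ℕ) :
    Set (braidClass M α) :=
  {y | sig M α y.1 i = sig M α x i}

/-- `x` and `y` differ by a single braid move occurring in the `j`-th braid shadow
of `[α]` (i.e. the edge `{x,y}` of the braid graph is labeled by `j`). -/
noncomputable def EdgeLabeled (M : CoxeterMatrix B) (α x y : List B) (j : ℕ) : Prop :=
  1 ≤ j ∧ j ≤ braidDim M α ∧
    (BraidMoveAt M x y (nthCenter M α j - 2) ∨ BraidMoveAt M y x (nthCenter M α j - 2))

/-- `x` and `y` differ by a single braid move occurring in the braid shadow with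
(1-based) center `c`. -/
def MoveAtCenter (M : CoxeterMatrix B) (x y : List B) (c : ℕ) : Prop :=
  BraidMoveAt M x y (c - 2) ∨ BraidMoveAt M y x (c - 2)

/-- `BraidSeq M α js x y` : the list `js` of braid-shadow numbers records a braid sequence
transforming `x` into `y`, each move being applied in the indicated braid shadow of `[α]`. -/
noncomputable def BraidSeq (M : CoxeterMatrix B) (α : List B) :
    List ℕ → List B → List B → Prop
  | [], x, y => x = y
  | j :: js, x, y => ∃ z, EdgeLabeled M α x z j ∧ BraidSeq M α js z y

/-- A braid sequence from `x` to `y` is *minimal* if no shorter braid sequence from `x`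
to `y` exists. -/
noncomputable def MinimalBraidSeq (M : CoxeterMatrix B) (α : List B)
    (js : List ℕ) (x y : List B) : Prop :=
  BraidSeq M α js x y ∧ ∀ ls : List ℕ, BraidSeq M α ls x y → js.length ≤ ls.length

/-- `Δ(sig(α), sig(β))`: the number of positions at which the signatures of `α` and `β`
differ. -/
noncomputable def sigDelta (M : CoxeterMatrix B) (α β : List B) : ℕ :=
  {i | 1 ≤ i ∧ i ≤ braidDim M α ∧ sig M α α i ≠ sig M α β i}.ncard

/-- A reduced expression is a *link* if it has length 1, or it has odd length `m` and the
braid shadows of its braid class are exactly `⟦1,3⟧, ⟦3,5⟧, …, ⟦m-2,m⟧`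
(equivalently, the shadow centers are exactly the even numbers `2, 4, …, m-1`). -/
def IsLink (M : CoxeterMatrix B) (α : List B) : Prop :=
  1 ≤ α.length ∧
    (α.length = 1 ∨ (Odd α.length ∧
      classCenters M α = {c | Even c ∧ 2 ≤ c ∧ c + 1 ≤ α.length}))

/-- `maj M α β γ i`: the majority among the `i`-th signature entries of `α`, `β`, `γ`. -/
noncomputable def maj (M : CoxeterMatrix B) (α β γ : List B) (i : ℕ) : Option B :=
  if sig M α α i = sig M α β i ∨ sig M α α i = sig M α γ i then sig M α α i
  else sig M α β i

/-- `sigbarPair M α x y`: the set of members of `[α]` whose signature agrees with the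
common signature entries of `x` and `y`. -/
noncomputable def sigbarPair (M : CoxeterMatrix B) (α x y : List B) :
    Set (braidClass M α) :=
  {z | ∀ i : ℕ, 1 ≤ i → i ≤ braidDim M α →
    sig M α x i = sig M α y i → sig M α z.1 i = sig M α x i}

/-! ### Graph-theoretic notions -/

/-- A set `U` of vertices of a graph is *convex* if every vertex on every geodesic
(shortest path) between two vertices of `U` belongs to `U`. -/
def GraphConvex {V : Type*} (G : SimpleGraph V) (U : Set V) : Prop :=
  ∀ u ∈ U, ∀ v ∈ U, ∀ p : G.Walk u v, p.length = G.dist u v → ∀ x ∈ p.support, x ∈ U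

/-- The interval `I(u,v)`: the set of vertices lying on some geodesic between `u` and `v`. -/
def interval {V : Type*} (G : SimpleGraph V) (u v : V) : Set V :=
  {x | ∃ p : G.Walk u v, p.length = G.dist u v ∧ x ∈ p.support}

/-- A connected graph is *median* if any three vertices admit a unique median. -/
def IsMedianGraph {V : Type*} (G : SimpleGraph V) : Prop :=
  G.Connected ∧ ∀ u v w : V,
    ∃! x, x ∈ interval G u v ∩ interval G u w ∩ interval G v w

/-- The hypercube of dimension `n`: vertices are binary strings of length `n`, adjacent
iff they differ in exactly one digit. -/
def hypercube (n : ℕ) : SimpleGraph (Fin n → Bool) :=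
  SimpleGraph.fromRel (fun x y => ∃! i, x i ≠ y i)

/-- A graph is a *partial cube* if it admits an isometric embedding into some hypercube. -/
def IsPartialCube {V : Type*} (G : SimpleGraph V) : Prop :=
  ∃ (n : ℕ) (f : V → Fin n → Bool),
    ∀ u v : V, (hypercube n).dist (f u) (f v) = G.dist u v

/-- The isometric dimension of a graph: the minimal dimension of a hypercube into which it
isometrically embeds. -/
noncomputable def isoDim {V : Type*} (G : SimpleGraph V) : ℕ :=
  sInf {n | ∃ f : V → Fin n → Bool,
    ∀ u v : V, (hypercube n).dist (f u) (f v) = G.dist u v}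

/-- The semicube `W_{uv}` : the set of vertices strictly closer to `u` than to `v`. -/
def semicube {V : Type*} (G : SimpleGraph V) (u v : V) : Set V :=
  {w | G.dist w u < G.dist w v}

/-- Pointwise description of a braid move. -/
structure MoveDesc (M : CoxeterMatrix B) (x y : List B) (p : ℕ) (s t : B) : Prop where
  hM : M s t = 3
  hp : p + 3 ≤ x.length
  hlen : y.length = x.length
  hx0 : x[p]? = some s
  hx1 : x[p+1]? = some t
  hx2 : x[p+2]? = some s
  hy0 : y[p]? = some t
  hy1 : y[p+1]? = some s
  hy2 : y[p+2]? = some t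
  hout : ∀ i, i < p ∨ p + 2 < i → y[i]? = x[i]?

lemma getElem?_window (A C : List B) (a b c : B) (i : ℕ) :
    (A ++ [a,b,c] ++ C)[i]? =
      if i < A.length then A[i]? else if i = A.length then some a
      else if i = A.length + 1 then some b else if i = A.length + 2 then some c
      else C[i - (A.length+3)]? := by
  rw [List.append_assoc, List.getElem?_append]
  by_cases h1 : i < A.length
  · simp [h1]
  · rw [if_neg h1, List.getElem?_append]
    by_cases h2 : i = A.length
    · subst h2; simp
    · by_cases h3 : i = A.length + 1
      · subst h3; simp
      · by_cases h4 : i = A.length + 2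
        · subst h4; simp
        · have e1 : ¬ (i - A.length < [a,b,c].length) := by
            simp only [List.length_cons, List.length_nil]; omega
          rw [if_neg e1, if_neg h1, if_neg h2, if_neg h3, if_neg h4]
          have e2 : i - A.length - [a,b,c].length = i - (A.length+3) := by
            simp only [List.length_cons, List.length_nil]; omega
          rw [e2]

lemma length_window (A C : List B) (a b c : B) :
    (A ++ [a,b,c] ++ C).length = A.length + 3 + C.length := by simp; omega

lemma moveAt_iff {M : CoxeterMatrix B} {x y : List B} {p : ℕ} :
    BraidMoveAt M x y p ↔ ∃ s t, MoveDesc M x y p s t := by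
  constructor
  · rintro ⟨s, t, hM, hx, hy⟩
    have hp : p + 3 ≤ x.length := by
      have h := congrArg List.length hx
      rw [length_window] at h
      simp [List.length_take] at h
      omega
    have hA : (x.take p).length = p := by simp [List.length_take]; omega
    have hC : (x.drop (p+3)).length = x.length - (p + 3) := by simp
    refine ⟨s, t, ?_, ?_, ?_, ?_, ?_, ?_, ?_, ?_, ?_, ?_⟩ <;>
      try (first
        | (rw [hy, getElem?_window, hA]; simp)
        | skip)
    · exact hM
    · exact hp
    · rw [hy, length_window, hA, hC]
      conv_rhs => rw [hx, length_window, hA, hC]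
    · conv_lhs => rw [hx, getElem?_window, hA]
      simp
    · conv_lhs => rw [hx]
      rw [getElem?_window, hA]
      simp
    · conv_lhs => rw [hx]
      rw [getElem?_window, hA]
      simp
    · intro i hi
      conv_lhs => rw [hy]
      conv_rhs => rw [hx]
      rw [getElem?_window, getElem?_window, hA]
      rcases hi with hi | hi
      · rw [if_pos hi, if_pos hi]
      · rw [if_neg (by omega), if_neg (by omega), if_neg (by omega), if_neg (by omega),
          if_neg (by omega), if_neg (by omega), if_neg (by omega), if_neg (by omega)]
  · rintro ⟨s, t, d⟩
    have hp := d.hp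
    have hA : (x.take p).length = p := by simp [List.length_take]; omega
    refine ⟨s, t, d.hM, ?_, ?_⟩
    · apply List.ext_getElem?
      intro i
      rw [getElem?_window, hA]
      by_cases h1 : i < p
      · rw [if_pos h1, List.getElem?_take, if_pos h1]
      · by_cases h2 : i = p
        · subst h2; simpa using d.hx0
        · by_cases h3 : i = p + 1
          · subst h3; simpa using d.hx1
          · by_cases h4 : i = p + 2
            · subst h4; simpa using d.hx2
            · rw [if_neg h1, if_neg h2, if_neg h3, if_neg h4, List.getElem?_drop]
              congr 1; omega
    · apply List.ext_getElem?
      intro i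
      rw [getElem?_window, hA]
      by_cases h1 : i < p
      · rw [if_pos h1, List.getElem?_take, if_pos h1]
        exact d.hout i (Or.inl h1)
      · by_cases h2 : i = p
        · subst h2; simpa using d.hy0
        · by_cases h3 : i = p + 1
          · subst h3; simpa using d.hy1
          · by_cases h4 : i = p + 2
            · subst h4; simpa using d.hy2
            · rw [if_neg h1, if_neg h2, if_neg h3, if_neg h4, List.getElem?_drop]
              rw [d.hout i (by omega)]
              congr 1; omega

section Stage2
variable {M : CoxeterMatrix B}

lemma MoveDesc.symm {x y : List B} {p : ℕ} {s t : B} (d : MoveDesc M x y p s t) :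
    MoveDesc M y x p t s where
  hM := by rw [M.symmetric]; exact d.hM
  hp := by rw [d.hlen]; exact d.hp
  hlen := d.hlen.symm
  hx0 := d.hy0
  hx1 := d.hy1
  hx2 := d.hy2
  hy0 := d.hx0
  hy1 := d.hx1
  hy2 := d.hx2
  hout := fun i hi => (d.hout i hi).symm

lemma moveAt_symm {x y : List B} {p : ℕ} (h : BraidMoveAt M x y p) :
    BraidMoveAt M y x p := by
  rw [moveAt_iff] at h ⊢
  obtain ⟨s, t, d⟩ := h
  exact ⟨t, s, d.symm⟩

lemma moveAt_length {x y : List B} {p : ℕ} (h : BraidMoveAt M x y p) :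
    y.length = x.length := by
  rw [moveAt_iff] at h; obtain ⟨s, t, d⟩ := h; exact d.hlen

lemma moveAt_ne {x y : List B} {p : ℕ} (h : BraidMoveAt M x y p) : x ≠ y := by
  rw [moveAt_iff] at h; obtain ⟨s, t, d⟩ := h
  intro e
  have h1 : s = t := by
    have := d.hx0
    rw [e, d.hy0] at this
    exact (Option.some_inj.mp this).symm
  have h2 := d.hM
  rw [h1, M.diagonal t] at h2
  omega

lemma moveAt_deterministic {x y y' : List B} {p : ℕ} (h : BraidMoveAt M x y p)
    (h' : BraidMoveAt M x y' p) : y = y' := by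
  rw [moveAt_iff] at h h'
  obtain ⟨s, t, d⟩ := h
  obtain ⟨s', t', d'⟩ := h'
  have hs : s = s' := by
    have h := d.hx0; rw [d'.hx0] at h; exact (Option.some_inj.mp h).symm
  have ht : t = t' := by
    have h := d.hx1; rw [d'.hx1] at h; exact (Option.some_inj.mp h).symm
  subst hs; subst ht
  apply List.ext_getElem?
  intro i
  by_cases h1 : i < p
  · rw [d.hout i (Or.inl h1), d'.hout i (Or.inl h1)]
  · by_cases h2 : i = p
    · subst h2; rw [d.hy0, d'.hy0]
    · by_cases h3 : i = p + 1
      · subst h3; rw [d.hy1, d'.hy1]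
      · by_cases h4 : i = p + 2
        · subst h4; rw [d.hy2, d'.hy2]
        · rw [d.hout i (by omega), d'.hout i (by omega)]

/-- Build a braid move from a pattern occurring in `x`. -/
lemma moveAt_mk {x : List B} {p : ℕ} {s t : B} (hM : M s t = 3) (hp : p + 3 ≤ x.length)
    (h0 : x[p]? = some s) (h1 : x[p+1]? = some t) (h2 : x[p+2]? = some s) :
    BraidMoveAt M x (x.take p ++ [t,s,t] ++ x.drop (p+3)) p := by
  have hA : (x.take p).length = p := by simp [List.length_take]; omega
  rw [moveAt_iff]
  refine ⟨s, t, hM, hp, ?_, h0, h1, h2, ?_, ?_, ?_, ?_⟩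
  · rw [length_window, hA]; simp; omega
  · rw [getElem?_window, hA]; simp
  · rw [getElem?_window, hA]; simp
  · rw [getElem?_window, hA]; simp
  · intro i hi
    rw [getElem?_window, hA]
    rcases hi with hi | hi
    · rw [if_pos hi, List.getElem?_take, if_pos hi]
    · rw [if_neg (by omega), if_neg (by omega), if_neg (by omega), if_neg (by omega),
        List.getElem?_drop]
      congr 1; omega

end Stage2

section Stage3
variable {W : Type*} [Group W] {M : CoxeterMatrix B} (cs : CoxeterSystem M W)

lemma braid_rel {s t : B} (h : M s t = 3) :
    cs.simple s * cs.simple t * cs.simple s = cs.simple t * cs.simple s * cs.simple t := by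
  set a := cs.simple s
  set b := cs.simple t
  have h3 : (a * b) ^ 3 = 1 := by rw [← h]; exact cs.simple_mul_simple_pow s t
  have e1 : a * b * a * (b * a * b) = 1 := by
    have : (a * b) ^ 3 = a * b * a * (b * a * b) := by
      rw [pow_succ, pow_succ, pow_one]; group
    rw [← this, h3]
  have e2 : b * a * b * (b * a * b) = 1 := by
    have hb : b * b = 1 := cs.simple_mul_simple_self t
    have ha : a * a = 1 := cs.simple_mul_simple_self s
    calc b * a * b * (b * a * b) = b * a * (b * b) * a * b := by group
    _ = b * (a * a) * b := by rw [hb]; group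
    _ = b * b := by rw [ha]; group
    _ = 1 := hb
  calc a * b * a = (a * b * a * (b * a * b)) * (b * a * b)⁻¹ := by group
  _ = (b * a * b * (b * a * b)) * (b * a * b)⁻¹ := by rw [e1, e2]
  _ = b * a * b := by group

lemma moveAt_wordProd {x y : List B} {p : ℕ} (h : BraidMoveAt M x y p) :
    cs.wordProd x = cs.wordProd y := by
  obtain ⟨s, t, hM, hx, hy⟩ := h
  rw [hy]
  conv_lhs => rw [hx]
  simp only [cs.wordProd_append]
  congr 2
  simp only [cs.wordProd_cons, cs.wordProd_singleton, cs.wordProd_nil]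
  have := braid_rel cs hM
  rw [mul_one, mul_one, ← mul_assoc, ← mul_assoc] at *
  exact this

lemma moveAt_isReduced {x y : List B} {p : ℕ} (h : BraidMoveAt M x y p)
    (hx : cs.IsReduced x) : cs.IsReduced y := by
  unfold CoxeterSystem.IsReduced at *
  rw [← moveAt_wordProd cs h, moveAt_length h, hx]

/-- Chains of braid moves with recorded positions. -/
def PChain (M : CoxeterMatrix B) : List ℕ → List B → List B → Prop
  | [], x, y => x = y
  | p :: ps, x, y => ∃ z, BraidMoveAt M x z p ∧ PChain M ps z y

lemma pchain_nil {x y : List B} : PChain M [] x y ↔ x = y := Iff.rfl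

lemma pchain_cons {p : ℕ} {ps : List ℕ} {x y : List B} :
    PChain M (p :: ps) x y ↔ ∃ z, BraidMoveAt M x z p ∧ PChain M ps z y := Iff.rfl

lemma pchain_append {ps qs : List ℕ} {x y : List B} :
    PChain M (ps ++ qs) x y ↔ ∃ z, PChain M ps x z ∧ PChain M qs z y := by
  induction ps generalizing x with
  | nil =>
      simp only [List.nil_append]
      constructor
      · intro h; exact ⟨x, rfl, h⟩
      · rintro ⟨z, hz, h⟩; rw [pchain_nil] at hz; rw [hz]; exact h
  | cons p ps ih =>
      rw [List.cons_append]
      simp only [pchain_cons]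
      constructor
      · rintro ⟨z, hz, h2⟩
        obtain ⟨w, h3, h4⟩ := ih.mp h2
        exact ⟨w, ⟨z, hz, h3⟩, h4⟩
      · rintro ⟨w, ⟨z, hz, h3⟩, h4⟩
        exact ⟨z, hz, ih.mpr ⟨w, h3, h4⟩⟩

lemma pchain_reverse {ps : List ℕ} {x y : List B} (h : PChain M ps x y) :
    PChain M ps.reverse y x := by
  induction ps generalizing x with
  | nil => simp [PChain] at *; exact h.symm
  | cons p ps ih =>
      obtain ⟨z, hz, h2⟩ := h
      simp only [List.reverse_cons]
      rw [pchain_append]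
      exact ⟨z, ih h2, x, moveAt_symm hz, rfl⟩

lemma pchain_braidEquiv {ps : List ℕ} {x y : List B} (h : PChain M ps x y) :
    BraidEquiv M x y := by
  induction ps generalizing x with
  | nil => rw [pchain_nil] at h; cases h; exact Relation.ReflTransGen.refl
  | cons p ps ih =>
      obtain ⟨z, hz, h2⟩ := h
      exact Relation.ReflTransGen.head ⟨p, hz⟩ (ih h2)

lemma braidEquiv_pchain {x y : List B} (h : BraidEquiv M x y) :
    ∃ ps, PChain M ps x y := by
  induction h with
  | refl => exact ⟨[], rfl⟩
  | tail _ h ih =>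
      obtain ⟨ps, hps⟩ := ih
      obtain ⟨p, hp⟩ := h
      refine ⟨ps ++ [p], ?_⟩
      rw [pchain_append]
      exact ⟨_, hps, _, hp, rfl⟩

lemma braidEquiv_symm {x y : List B} (h : BraidEquiv M x y) : BraidEquiv M y x := by
  obtain ⟨ps, hps⟩ := braidEquiv_pchain h
  exact pchain_braidEquiv (pchain_reverse hps)

lemma braidEquiv_trans {x y z : List B} (h : BraidEquiv M x y) (h' : BraidEquiv M y z) :
    BraidEquiv M x z := Relation.ReflTransGen.trans h h'

lemma braidEquiv_length {x y : List B} (h : BraidEquiv M x y) : y.length = x.length := by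
  induction h with
  | refl => rfl
  | tail _ h ih => obtain ⟨p, hp⟩ := h; rw [moveAt_length hp, ih]

lemma braidEquiv_isReduced {x y : List B} (h : BraidEquiv M x y) (hx : cs.IsReduced x) :
    cs.IsReduced y := by
  induction h with
  | refl => exact hx
  | tail _ h ih => obtain ⟨p, hp⟩ := h; exact moveAt_isReduced cs hp ih

/-- Pointwise characterization of a braid shadow. -/
lemma shadow_iff {z : List B} {c : ℕ} :
    ShadowCenter M z c ↔ 2 ≤ c ∧ ∃ y, BraidMoveAt M z y (c - 2) := by
  constructor
  · rintro ⟨hc, s, t, hM, hz⟩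
    refine ⟨hc, ?_⟩
    have hd : z.drop (c + 1) = z.drop (c - 2 + 3) := by congr 1; omega
    rw [hd] at hz
    have hp : c - 2 + 3 ≤ z.length := by
      have h := congrArg List.length hz
      rw [length_window] at h
      simp [List.length_take] at h
      omega
    have hA : (z.take (c-2)).length = c - 2 := by simp [List.length_take]; omega
    have h0 : z[c-2]? = some s := by
      conv_lhs => rw [hz]
      rw [getElem?_window, hA]; simp
    have h1 : z[c-2+1]? = some t := by
      conv_lhs => rw [hz]
      rw [getElem?_window, hA]; simp
    have h2 : z[c-2+2]? = some s := by
      conv_lhs => rw [hz]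
      rw [getElem?_window, hA]; simp
    exact ⟨_, moveAt_mk hM hp h0 h1 h2⟩
  · rintro ⟨hc, y, hy⟩
    obtain ⟨s, t, hM, hz, -⟩ := hy
    refine ⟨hc, s, t, hM, ?_⟩
    have hd : z.drop (c + 1) = z.drop (c - 2 + 3) := by congr 1; omega
    rw [hd]
    exact hz

lemma moveAt_shadow {x y : List B} {p : ℕ} (h : BraidMoveAt M x y p) :
    ShadowCenter M x (p + 2) := by
  rw [shadow_iff]
  exact ⟨by omega, y, by simpa using h⟩

end Stage3

section Stage4
variable {W : Type*} [Group W] {M : CoxeterMatrix B} (cs : CoxeterSystem M W)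

lemma take_mid_drop (z : List B) (i k : ℕ) :
    z = z.take i ++ (z.drop i).take k ++ z.drop (i + k) := by
  rw [List.append_assoc]
  conv_lhs => rw [← List.take_append_drop i z]
  congr 1
  conv_lhs => rw [← List.take_append_drop k (z.drop i)]
  congr 1
  rw [List.drop_drop]
  all_goals (congr 1; omega)

lemma mid_eq_two {z : List B} {i : ℕ} {a b : B}
    (h0 : z[i]? = some a) (h1 : z[i+1]? = some b) : (z.drop i).take 2 = [a, b] := by
  have hl : i + 1 < z.length := by
    rw [List.getElem?_eq_some_iff] at h1; exact h1.1
  apply List.ext_getElem?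
  intro n
  rw [List.getElem?_take]
  match n with
  | 0 => simpa [List.getElem?_drop] using h0
  | 1 => simpa [List.getElem?_drop] using h1
  | (n+2) =>
      rw [if_neg (by omega)]
      simp

lemma mid_eq_four {z : List B} {i : ℕ} {a b c d : B}
    (h0 : z[i]? = some a) (h1 : z[i+1]? = some b) (h2 : z[i+2]? = some c)
    (h3 : z[i+3]? = some d) : (z.drop i).take 4 = [a, b, c, d] := by
  apply List.ext_getElem?
  intro n
  rw [List.getElem?_take]
  match n with
  | 0 => simpa [List.getElem?_drop] using h0
  | 1 => simpa [List.getElem?_drop] using h1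
  | 2 => simpa [List.getElem?_drop] using h2
  | 3 => simpa [List.getElem?_drop] using h3
  | (n+4) =>
      rw [if_neg (by omega)]
      simp

lemma not_reduced_adjacent {z : List B} {i : ℕ} {a : B} (hz : cs.IsReduced z)
    (h0 : z[i]? = some a) (h1 : z[i+1]? = some a) : False := by
  have hl : i + 1 < z.length := by
    rw [List.getElem?_eq_some_iff] at h1; exact h1.1
  have hd : z = z.take i ++ [a, a] ++ z.drop (i + 2) := by
    conv_lhs => rw [take_mid_drop z i 2]
    rw [mid_eq_two h0 h1]
  have hπ : cs.wordProd z = cs.wordProd (z.take i ++ z.drop (i+2)) := by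
    conv_lhs => rw [hd]
    simp only [cs.wordProd_append]
    have : cs.wordProd [a, a] = 1 := by
      simp [cs.wordProd_cons, cs.wordProd_singleton]
    rw [this, mul_one]
  have hle := cs.length_wordProd_le (z.take i ++ z.drop (i+2))
  rw [← hπ, hz] at hle
  simp only [List.length_append, List.length_take, List.length_drop] at hle
  omega

lemma not_reduced_alternating {z : List B} {i : ℕ} {a b : B} (hz : cs.IsReduced z)
    (hM : M a b = 3)
    (h0 : z[i]? = some a) (h1 : z[i+1]? = some b) (h2 : z[i+2]? = some a)
    (h3 : z[i+3]? = some b) : False := by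
  have hl : i + 3 < z.length := by
    rw [List.getElem?_eq_some_iff] at h3; exact h3.1
  have hd : z = z.take i ++ [a, b, a, b] ++ z.drop (i + 4) := by
    conv_lhs => rw [take_mid_drop z i 4]
    rw [mid_eq_four h0 h1 h2 h3]
  have key : cs.wordProd [a, b, a, b] = cs.wordProd [b, a] := by
    simp only [cs.wordProd_cons, cs.wordProd_singleton, cs.wordProd_nil, mul_one]
    set u := cs.simple a
    set v := cs.simple b
    have h3' : (u * v) ^ 3 = 1 := by rw [← hM]; exact cs.simple_mul_simple_pow a b
    have e1 : (u * v) * (u * v) * (u * v) = 1 := by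
      rw [← h3', pow_succ, pow_succ, pow_one]
    have hu : u * u = 1 := cs.simple_mul_simple_self a
    have hv : v * v = 1 := cs.simple_mul_simple_self b
    have : u * (v * (u * v)) = (u*v) * (u*v) := by group
    rw [this]
    calc (u*v) * (u*v) = (u*v)*(u*v)*((u*v)*(v*u)) := by
          rw [show (u*v)*(v*u) = u*(v*v)*u by group, hv, show u*1*u = u*u by group, hu, mul_one]
    _ = ((u*v)*(u*v)*(u*v))*(v*u) := by group
    _ = v * u := by rw [e1, one_mul]
  have hπ : cs.wordProd z = cs.wordProd (z.take i ++ [b, a] ++ z.drop (i+4)) := by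
    conv_lhs => rw [hd]
    simp only [cs.wordProd_append]
    rw [key]
    all_goals simp only [cs.wordProd_append]
  have hle := cs.length_wordProd_le (z.take i ++ [b, a] ++ z.drop (i+4))
  rw [← hπ, hz] at hle
  simp only [List.length_append, List.length_take, List.length_drop,
    List.length_cons, List.length_nil] at hle
  omega

lemma moveAt_appendR {x y : List B} {p : ℕ} (L : List B) (h : BraidMoveAt M x y p) :
    BraidMoveAt M (x ++ L) (y ++ L) p := by
  rw [moveAt_iff] at h ⊢
  obtain ⟨s, t, d⟩ := h
  have hp := d.hp
  have hget : ∀ (w : List B) (i : ℕ), i < x.length → w.length = x.length →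
      (w ++ L)[i]? = w[i]? := by
    intro w i hi hw
    rw [List.getElem?_append, if_pos (by omega)]
  refine ⟨s, t, d.hM, by simp; omega, by simp [d.hlen], ?_, ?_, ?_, ?_, ?_, ?_, ?_⟩
  · rw [hget x p (by omega) rfl]; exact d.hx0
  · rw [hget x (p+1) (by omega) rfl]; exact d.hx1
  · rw [hget x (p+2) (by omega) rfl]; exact d.hx2
  · rw [hget y p (by omega) d.hlen]; exact d.hy0
  · rw [hget y (p+1) (by omega) d.hlen]; exact d.hy1
  · rw [hget y (p+2) (by omega) d.hlen]; exact d.hy2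
  · intro i hi
    by_cases hx : i < x.length
    · rw [hget y i hx d.hlen, hget x i hx rfl]
      exact d.hout i hi
    · have hy : ¬ i < y.length := by rw [d.hlen]; exact hx
      rw [List.getElem?_append, if_neg hy, List.getElem?_append, if_neg hx, d.hlen]

lemma moveAt_take {x y : List B} {p m : ℕ} (h : BraidMoveAt M x y p) (hm : p + 3 ≤ m) :
    BraidMoveAt M (x.take m) (y.take m) p := by
  rw [moveAt_iff] at h ⊢
  obtain ⟨s, t, d⟩ := h
  have hp := d.hp
  refine ⟨s, t, d.hM, by simp [List.length_take]; omega, by simp [d.hlen], ?_, ?_, ?_, ?_, ?_, ?_, ?_⟩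
  · rw [List.getElem?_take, if_pos (by omega)]; exact d.hx0
  · rw [List.getElem?_take, if_pos (by omega)]; exact d.hx1
  · rw [List.getElem?_take, if_pos (by omega)]; exact d.hx2
  · rw [List.getElem?_take, if_pos (by omega)]; exact d.hy0
  · rw [List.getElem?_take, if_pos (by omega)]; exact d.hy1
  · rw [List.getElem?_take, if_pos (by omega)]; exact d.hy2
  · intro i hi
    rw [List.getElem?_take, List.getElem?_take]
    by_cases him : i < m
    · rw [if_pos him, if_pos him]; exact d.hout i hi
    · rw [if_neg him, if_neg him]

lemma moveAt_drop_eq {x y : List B} {p m : ℕ} (h : BraidMoveAt M x y p) (hm : p + 3 ≤ m) :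
    x.drop m = y.drop m := by
  rw [moveAt_iff] at h
  obtain ⟨s, t, d⟩ := h
  apply List.ext_getElem?
  intro j
  rw [List.getElem?_drop, List.getElem?_drop]
  exact (d.hout (m + j) (by omega)).symm

lemma pchain_appendR {ps : List ℕ} {x y : List B} (L : List B) (h : PChain M ps x y) :
    PChain M ps (x ++ L) (y ++ L) := by
  induction ps generalizing x with
  | nil => rw [pchain_nil] at h ⊢; rw [h]
  | cons p ps ih =>
      obtain ⟨z, hz, h2⟩ := h
      exact ⟨z ++ L, moveAt_appendR L hz, ih h2⟩

lemma pchain_take {ps : List ℕ} {x y : List B} {m : ℕ} (hps : ∀ p ∈ ps, p + 3 ≤ m)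
    (h : PChain M ps x y) : PChain M ps (x.take m) (y.take m) := by
  induction ps generalizing x with
  | nil => rw [pchain_nil] at h ⊢; rw [h]
  | cons p ps ih =>
      obtain ⟨z, hz, h2⟩ := h
      exact ⟨z.take m, moveAt_take hz (hps p (by simp)),
        ih (fun q hq => hps q (by simp [hq])) h2⟩

lemma pchain_drop_eq {ps : List ℕ} {x y : List B} {m : ℕ} (hps : ∀ p ∈ ps, p + 3 ≤ m)
    (h : PChain M ps x y) : x.drop m = y.drop m := by
  induction ps generalizing x with
  | nil => rw [pchain_nil] at h; rw [h]
  | cons p ps ih =>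
      obtain ⟨z, hz, h2⟩ := h
      rw [moveAt_drop_eq hz (hps p (by simp))]
      exact ih (fun q hq => hps q (by simp [hq])) h2

lemma pchain_out {ps : List ℕ} {x y : List B} {i : ℕ}
    (hps : ∀ p ∈ ps, i < p ∨ p + 2 < i) (h : PChain M ps x y) : y[i]? = x[i]? := by
  induction ps generalizing x with
  | nil => rw [pchain_nil] at h; rw [h]
  | cons p ps ih =>
      obtain ⟨z, hz, h2⟩ := h
      rw [moveAt_iff] at hz
      obtain ⟨s, t, d⟩ := hz
      rw [ih (fun q hq => hps q (by simp [hq])) h2]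
      exact d.hout i (by rcases hps p (by simp) with h | h; exacts [Or.inl h, Or.inr h])

lemma pchain_length {ps : List ℕ} {x y : List B} (h : PChain M ps x y) :
    y.length = x.length := braidEquiv_length (pchain_braidEquiv h)

end Stage4

section Stage5
variable {W : Type*} [Group W] {M : CoxeterMatrix B} (cs : CoxeterSystem M W)

/-- All braid shadows have even centers. -/
def NoOdd (M : CoxeterMatrix B) (z : List B) : Prop := ∀ c, ShadowCenter M z c → Even c

lemma moveAt_even {x y : List B} {p : ℕ} (h : BraidMoveAt M x y p) (hx : NoOdd M x) :
    Even p := by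
  have := hx (p + 2) (moveAt_shadow h)
  rcases this with ⟨k, hk⟩
  exact ⟨k - 1, by omega⟩

/-- The last four letters of `z` (of length `n`) are `a, b, c, d`. -/
def Tail4 (z : List B) (n : ℕ) (a b c d : B) : Prop :=
  z[n-4]? = some a ∧ z[n-3]? = some b ∧ z[n-2]? = some c ∧ z[n-1]? = some d

/-- The typing invariant for the last four letters of the words in a braid class
with a crossable anchor. -/
def Typed (M : CoxeterMatrix B) (e f ρ : B) (n : ℕ) (z : List B) : Prop :=
  Tail4 z n ρ e f e ∨ (Tail4 z n e ρ f e ∧ M ρ e = 3)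
    ∨ Tail4 z n ρ f e f ∨ (Tail4 z n f ρ e f ∧ M ρ f = 3)

lemma typed_step {e f ρ : B} {n : ℕ} {z z' : List B} {p : ℕ}
    (hn : 5 ≤ n) (hodd : Odd n) (hρe : ρ ≠ e) (hρf : ρ ≠ f)
    (hz : z.length = n) (ht : Typed M e f ρ n z) (hm : BraidMoveAt M z z' p)
    (hpe : Even p) : Typed M e f ρ n z' := by
  rw [moveAt_iff] at hm
  obtain ⟨s, t, d⟩ := hm
  have hp3 : p + 3 ≤ n := by rw [← hz]; exact d.hp
  have hcase : p = n - 3 ∨ p = n - 5 ∨ p + 3 ≤ n - 4 := by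
    rcases hodd with ⟨k, hk⟩
    rcases hpe with ⟨j, hj⟩
    omega
  rcases hcase with hc | hc | hc
  · -- top move
    subst hc
    have e3 : n - 3 + 1 = n - 2 := by omega
    have e2 : n - 3 + 2 = n - 1 := by omega
    rcases ht with ⟨h4, h3, h2, h1⟩ | ⟨⟨h4, h3, h2, h1⟩, hc1⟩ | ⟨h4, h3, h2, h1⟩ |
      ⟨⟨h4, h3, h2, h1⟩, hc1⟩
    · -- A → C
      have hs : s = e := by have := d.hx0; rw [h3] at this; exact Option.some_inj.mp this.symm
      have ht' : t = f := by
        have := d.hx1; rw [e3, h2] at this; exact Option.some_inj.mp this.symm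
      refine Or.inr (Or.inr (Or.inl ⟨?_, ?_, ?_, ?_⟩))
      · rw [d.hout (n-4) (by omega)]; exact h4
      · rw [d.hy0, ht']
      · rw [show n-2 = n-3+1 by omega, d.hy1, hs]
      · rw [show n-1 = n-3+2 by omega, d.hy2, ht']
    · -- B : impossible
      exfalso
      have hs : s = ρ := by have := d.hx0; rw [h3] at this; exact Option.some_inj.mp this.symm
      have hs' : s = e := by
        have := d.hx2; rw [e2, h1] at this; exact Option.some_inj.mp this.symm
      exact hρe (hs ▸ hs')
    · -- C → A
      have hs : s = f := by have := d.hx0; rw [h3] at this; exact Option.some_inj.mp this.symm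
      have ht' : t = e := by
        have := d.hx1; rw [e3, h2] at this; exact Option.some_inj.mp this.symm
      refine Or.inl ⟨?_, ?_, ?_, ?_⟩
      · rw [d.hout (n-4) (by omega)]; exact h4
      · rw [d.hy0, ht']
      · rw [show n-2 = n-3+1 by omega, d.hy1, hs]
      · rw [show n-1 = n-3+2 by omega, d.hy2, ht']
    · -- D : impossible
      exfalso
      have hs : s = ρ := by have := d.hx0; rw [h3] at this; exact Option.some_inj.mp this.symm
      have hs' : s = f := by
        have := d.hx2; rw [e2, h1] at this; exact Option.some_inj.mp this.symm
      exact hρf (hs ▸ hs')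
  · -- the ₁₂ move
    subst hc
    have e4 : n - 5 + 1 = n - 4 := by omega
    have e3 : n - 5 + 2 = n - 3 := by omega
    have hMst := d.hM
    have hy4 : z'[n-4]? = some s := by rw [← e4, d.hy1]
    have hy3 : z'[n-3]? = some t := by rw [← e3, d.hy2]
    have hy2 : z'[n-2]? = z[n-2]? := d.hout (n-2) (by omega)
    have hy1 : z'[n-1]? = z[n-1]? := d.hout (n-1) (by omega)
    rcases ht with ⟨h4, h3, h2, h1⟩ | ⟨⟨h4, h3, h2, h1⟩, hc1⟩ | ⟨h4, h3, h2, h1⟩ |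
      ⟨⟨h4, h3, h2, h1⟩, hc1⟩
    · -- A → B
      have hts : t = ρ := by
        have := d.hx1; rw [e4, h4] at this; exact Option.some_inj.mp this.symm
      have hss : s = e := by
        have := d.hx2; rw [e3, h3] at this; exact Option.some_inj.mp this.symm
      refine Or.inr (Or.inl ⟨⟨?_, ?_, ?_, ?_⟩, ?_⟩)
      · rw [hy4, hss]
      · rw [hy3, hts]
      · rw [hy2]; exact h2
      · rw [hy1]; exact h1
      · rw [← hss, ← hts, M.symmetric]; exact hMst
    · -- B → A
      have hts : t = e := by
        have := d.hx1; rw [e4, h4] at this; exact Option.some_inj.mp this.symm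
      have hss : s = ρ := by
        have := d.hx2; rw [e3, h3] at this; exact Option.some_inj.mp this.symm
      refine Or.inl ⟨?_, ?_, ?_, ?_⟩
      · rw [hy4, hss]
      · rw [hy3, hts]
      · rw [hy2]; exact h2
      · rw [hy1]; exact h1
    · -- C → D
      have hts : t = ρ := by
        have := d.hx1; rw [e4, h4] at this; exact Option.some_inj.mp this.symm
      have hss : s = f := by
        have := d.hx2; rw [e3, h3] at this; exact Option.some_inj.mp this.symm
      refine Or.inr (Or.inr (Or.inr ⟨⟨?_, ?_, ?_, ?_⟩, ?_⟩))
      · rw [hy4, hss]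
      · rw [hy3, hts]
      · rw [hy2]; exact h2
      · rw [hy1]; exact h1
      · rw [← hss, ← hts, M.symmetric]; exact hMst
    · -- D → C
      have hts : t = f := by
        have := d.hx1; rw [e4, h4] at this; exact Option.some_inj.mp this.symm
      have hss : s = ρ := by
        have := d.hx2; rw [e3, h3] at this; exact Option.some_inj.mp this.symm
      refine Or.inr (Or.inr (Or.inl ⟨?_, ?_, ?_, ?_⟩))
      · rw [hy4, hss]
      · rw [hy3, hts]
      · rw [hy2]; exact h2
      · rw [hy1]; exact h1
  · -- deep move : tail unchanged
    have h1 : z'[n-4]? = z[n-4]? := d.hout (n-4) (by omega)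
    have h2 : z'[n-3]? = z[n-3]? := d.hout (n-3) (by omega)
    have h3 : z'[n-2]? = z[n-2]? := d.hout (n-2) (by omega)
    have h4 : z'[n-1]? = z[n-1]? := d.hout (n-1) (by omega)
    unfold Typed Tail4 at ht ⊢
    rw [h1, h2, h3, h4]
    exact ht

lemma typed_equiv {e f ρ : B} {n : ℕ} {z₀ z : List B}
    (hn : 5 ≤ n) (hodd : Odd n) (hρe : ρ ≠ e) (hρf : ρ ≠ f)
    (hz : z₀.length = n) (hno : ∀ y, BraidEquiv M z₀ y → NoOdd M y)
    (ht : Typed M e f ρ n z₀) (h : BraidEquiv M z₀ z) : Typed M e f ρ n z := by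
  induction h with
  | refl => exact ht
  | tail hxy h ih =>
      obtain ⟨p, hp⟩ := h
      rename_i y' z'
      have hlen : y'.length = n := by rw [braidEquiv_length hxy, hz]
      exact typed_step hn hodd hρe hρf hlen ih hp
        (moveAt_even hp (hno y' hxy))

end Stage5

section Stage6
variable {W : Type*} [Group W] {M : CoxeterMatrix B} (cs : CoxeterSystem M W)

lemma MoveDesc.st_ne {x y : List B} {p : ℕ} {s t : B} (d : MoveDesc M x y p s t) :
    s ≠ t := by
  intro h
  have h2 := d.hM
  rw [h, M.diagonal t] at h2
  omega

lemma pchain_bounds {ps : List ℕ} {x y : List B} (h : PChain M ps x y) :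
    ∀ p ∈ ps, p + 3 ≤ x.length := by
  induction ps generalizing x with
  | nil => intro p hp; simp at hp
  | cons q ps ih =>
      obtain ⟨z, hz, h2⟩ := h
      intro p hp
      rcases List.mem_cons.mp hp with h | h
      · subst h
        rw [moveAt_iff] at hz
        obtain ⟨s, t, d⟩ := hz
        exact d.hp
      · have := ih h2 p h
        rwa [moveAt_length hz] at this

lemma pchain_even {β₀ : List B} (hno : ∀ z, BraidEquiv M β₀ z → NoOdd M z)
    {ps : List ℕ} {x y : List B} (hx : BraidEquiv M β₀ x) (h : PChain M ps x y) :
    ∀ p ∈ ps, Even p := by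
  induction ps generalizing x with
  | nil => intro p hp; simp at hp
  | cons q ps ih =>
      obtain ⟨z, hz, h2⟩ := h
      intro p hp
      rcases List.mem_cons.mp hp with h | h
      · subst h
        exact moveAt_even hz (hno x hx)
      · refine ih (braidEquiv_trans hx (pchain_braidEquiv
          (show PChain M [q] x z from ⟨z, hz, rfl⟩))) h2 p h

/-- The set of (0-based) positions of centers at which `u` and `w` differ. -/
noncomputable def diffC (u w : List B) : Finset ℕ :=
  (Finset.range u.length).filter (fun p => Even p ∧ u[p+1]? ≠ w[p+1]?)

lemma diffC_card_le_chain {ps : List ℕ} {u w : List B}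
    (h : PChain M ps u w) (he : ∀ p ∈ ps, Even p) :
    (diffC u w).card ≤ ps.length := by
  induction ps generalizing u with
  | nil =>
      rw [pchain_nil] at h
      subst h
      simp [diffC]
  | cons q ps ih =>
      obtain ⟨z, hz, h2⟩ := h
      have hzlen : z.length = u.length := moveAt_length hz
      have hq : Even q := he q (by simp)
      have hsub : diffC u w ⊆ insert q (diffC z w) := by
        intro c hc
        simp only [diffC, Finset.mem_filter, Finset.mem_range] at hc
        obtain ⟨hcr, hce, hcd⟩ := hc
        rw [Finset.mem_insert]
        by_cases hcq : c = q
        · exact Or.inl hcq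
        · right
          simp only [diffC, Finset.mem_filter, Finset.mem_range]
          refine ⟨by omega, hce, ?_⟩
          rw [moveAt_iff] at hz
          obtain ⟨s, t, d⟩ := hz
          have hout : z[c+1]? = u[c+1]? := by
            apply d.hout
            obtain ⟨a, ha⟩ := hce
            obtain ⟨b, hb⟩ := hq
            omega
          rw [hout]
          exact hcd
      calc (diffC u w).card ≤ (insert q (diffC z w)).card := Finset.card_le_card hsub
  
      _ ≤ (diffC z w).card + 1 := Finset.card_insert_le _ _
      _ ≤ ps.length + 1 := by
          have := ih h2 (fun p hp => he p (by simp [hp]))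
          omega
      _ = (q :: ps).length := by simp

lemma nodup_le_diffC {ps : List ℕ} {u w : List B} (hnd : ps.Nodup)
    (hmem : ∀ p ∈ ps, p ∈ diffC u w) : ps.length ≤ (diffC u w).card := by
  have hsub : ps.toFinset ⊆ diffC u w := by
    intro p hp
    exact hmem p (by simpa using hp)
  calc ps.length = ps.toFinset.card := (List.toFinset_card_of_nodup hnd).symm
  _ ≤ (diffC u w).card := Finset.card_le_card hsub

lemma first_split {l : List ℕ} {x : ℕ} (h : x ∈ l) :
    ∃ a b, l = a ++ x :: b ∧ x ∉ a := by
  induction l with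
  | nil => simp at h
  | cons y l ih =>
      by_cases hxy : x = y
      · exact ⟨[], l, by rw [hxy]; rfl, by simp⟩
      · rcases List.mem_cons.mp h with h | h
        · exact absurd h hxy
        · obtain ⟨a, b, hab, hxa⟩ := ih h
          exact ⟨y :: a, b, by rw [hab]; rfl, by simp [hxa]; exact fun e => hxy e⟩

lemma short_equiv {x y : List B} (h : BraidEquiv M x y) (hl : x.length ≤ 2) : x = y := by
  induction h with
  | refl => rfl
  | tail hxy h ih =>
      obtain ⟨p, hp⟩ := h
      rw [moveAt_iff] at hp
      obtain ⟨s, t, d⟩ := hp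
      have := d.hp
      rw [← ih] at this
      omega

lemma mid_eq_three {z : List B} {i : ℕ} {a b c : B}
    (h0 : z[i]? = some a) (h1 : z[i+1]? = some b) (h2 : z[i+2]? = some c) :
    (z.drop i).take 3 = [a, b, c] := by
  apply List.ext_getElem?
  intro n
  rw [List.getElem?_take]
  match n with
  | 0 => simpa [List.getElem?_drop] using h0
  | 1 => simpa [List.getElem?_drop] using h1
  | 2 => simpa [List.getElem?_drop] using h2
  | (n+3) =>
      rw [if_neg (by omega)]
      simp

lemma eq_take_append_three {z : List B} {m : ℕ} {a b c : B}
    (h0 : z[m]? = some a) (h1 : z[m+1]? = some b) (h2 : z[m+2]? = some c)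
    (hl : z.length = m + 3) : z = z.take m ++ [a, b, c] := by
  conv_lhs => rw [take_mid_drop z m 3]
  rw [mid_eq_three h0 h1 h2]
  have : z.drop (m + 3) = [] := by
    apply List.drop_eq_nil_of_le
    omega
  rw [this, List.append_nil]

lemma take_eq_of_getElem? {x y : List B} {m : ℕ} (h : ∀ i, i < m → y[i]? = x[i]?) :
    y.take m = x.take m := by
  apply List.ext_getElem?
  intro i
  rw [List.getElem?_take, List.getElem?_take]
  by_cases him : i < m
  · rw [if_pos him, if_pos him]; exact h i him
  · rw [if_neg him, if_neg him]

lemma shadow_appendR {z : List B} {c : ℕ} (L : List B) (h : ShadowCenter M z c) :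
    ShadowCenter M (z ++ L) c := by
  rw [shadow_iff] at h ⊢
  obtain ⟨hc, y, hy⟩ := h
  exact ⟨hc, y ++ L, moveAt_appendR L hy⟩

end Stage6

section Stage7
variable {W : Type*} [Group W] {M : CoxeterMatrix B} (cs : CoxeterSystem M W)

/-- The statement to be proven by strong induction on `n`. -/
def StmtAt (cs : CoxeterSystem M W) (n : ℕ) : Prop :=
  ∀ β₀ : List B, β₀.length = n → cs.IsReduced β₀ →
    (∀ z, BraidEquiv M β₀ z → NoOdd M z) →
    ∀ u w, BraidEquiv M β₀ u → BraidEquiv M β₀ w →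
    ∃ ps, PChain M ps u w ∧ ps.Nodup ∧ ∀ p ∈ ps, Even p ∧ u[p+1]? ≠ w[p+1]?

lemma SL {n : ℕ} (hn : 5 ≤ n) (hodd : Odd n) (IH : StmtAt cs (n-2))
    {β₀ x x' y y' : List B} {ms : List ℕ}
    (hβred : cs.IsReduced β₀)
    (hno : ∀ z, BraidEquiv M β₀ z → NoOdd M z)
    (hx : BraidEquiv M β₀ x) (hxlen : x.length = n)
    (hc1 : BraidMoveAt M x x' (n-3)) (hc2 : BraidMoveAt M y' y (n-3))
    (hmid : PChain M ms x' y') (hms : ∀ p ∈ ms, p + 3 ≤ n - 2)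
    (hmse : ∀ p ∈ ms, Even p) :
    ∃ qs, PChain M qs x y ∧ qs.length ≤ ms.length ∧ ∀ p ∈ qs, p + 3 ≤ n - 2 := by
  have e1 : n - 3 + 1 = n - 2 := by omega
  have e2 : n - 3 + 2 = n - 1 := by omega
  obtain ⟨s, t, d1⟩ := moveAt_iff.mp hc1
  obtain ⟨s₂, t₂, d2⟩ := moveAt_iff.mp hc2
  have hx'len : x'.length = n := by rw [d1.hlen, hxlen]
  have hy'len : y'.length = n := by rw [pchain_length hmid, hx'len]
  have hylen : y.length = n := by rw [d2.hlen, hy'len]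
  -- the middle chain does not touch positions n-2 and n-1
  have hout2 : y'[n-2]? = x'[n-2]? :=
    pchain_out (fun p hp => Or.inr (by have := hms p hp; omega)) hmid
  have hout1 : y'[n-1]? = x'[n-1]? :=
    pchain_out (fun p hp => Or.inr (by have := hms p hp; omega)) hmid
  have hs₂ : s₂ = t := by
    have h := d2.hx2
    rw [e2, hout1, ← e2, d1.hy2] at h
    exact Option.some_inj.mp h.symm
  have ht₂ : t₂ = s := by
    have h := d2.hx1
    rw [e1, hout2, ← e1, d1.hy1] at h
    exact Option.some_inj.mp h.symm
  -- truncated words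
  set ts := x'.take (n-2) with hts_def
  set tw := y'.take (n-2) with htw_def
  have htslen : ts.length = n - 2 := by rw [hts_def]; simp [List.length_take]; omega
  have hmid' : PChain M ms ts tw := pchain_take hms hmid
  have hxred : cs.IsReduced x := braidEquiv_isReduced cs hx hβred
  have hx'red : cs.IsReduced x' := moveAt_isReduced cs hc1 hxred
  have htsred : cs.IsReduced ts := CoxeterSystem.IsReduced.take hx'red (n-2)
  have hx'equiv : BraidEquiv M β₀ x' :=
    braidEquiv_trans hx (pchain_braidEquiv (show PChain M [n-3] x x' from ⟨x', hc1, rfl⟩))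
  -- the braid class of ts
  have hno' : ∀ z, BraidEquiv M ts z → NoOdd M z := by
    intro z hz
    obtain ⟨ps', hps'⟩ := braidEquiv_pchain hz
    have hlift : PChain M ps' x' (z ++ x'.drop (n-2)) := by
      have := pchain_appendR (x'.drop (n-2)) hps'
      rwa [hts_def, List.take_append_drop] at this
    have hcls : BraidEquiv M β₀ (z ++ x'.drop (n-2)) :=
      braidEquiv_trans hx'equiv (pchain_braidEquiv hlift)
    intro c hc
    exact hno _ hcls c (shadow_appendR _ hc)
  obtain ⟨ps, hch, hnd, hcond⟩ := IH ts (by omega) htsred hno' ts tw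
    Relation.ReflTransGen.refl (pchain_braidEquiv hmid')
  have hbounds : ∀ p ∈ ps, p + 3 ≤ n - 2 := by
    intro p hp
    have := pchain_bounds hch p hp
    omega
  -- position n-3 of the truncations
  have hts3 : ts[n-3]? = some t := by
    rw [hts_def, List.getElem?_take, if_pos (by omega)]
    have := d1.hy0
    exact this
  have htw3 : tw[n-3]? = some t := by
    rw [htw_def, List.getElem?_take, if_pos (by omega)]
    have h := d2.hx0
    rw [h, hs₂]
  -- n-5 is not used by ps
  have hn5 : (n-5) ∉ ps := by
    intro hmem
    obtain ⟨a, b, hab, hna⟩ := first_split hmem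
    have hnb : (n-5) ∉ b := by
      have h := hnd
      rw [hab] at h
      have := List.Nodup.of_append_right h
      rw [List.nodup_cons] at this
      exact this.1
    rw [hab] at hch
    rw [pchain_append] at hch
    obtain ⟨m₁, hcha, hchb⟩ := hch
    obtain ⟨m₂, hmv, hchb⟩ := hchb
    have hma : m₁[n-3]? = some t := by
      rw [pchain_out (fun p hp => ?_) hcha, hts3]
      have hb := pchain_bounds hcha p hp
      have he : Even p := (hcond p (by rw [hab]; simp [hp])).1
      have hpne : p ≠ n - 5 := fun e => hna (e ▸ hp)
      right
      obtain ⟨j, hj⟩ := he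
      obtain ⟨k, hk⟩ := hodd
      rw [htslen] at hb
      omega
    obtain ⟨s₃, t₃, d₃⟩ := moveAt_iff.mp hmv
    have hs₃ : s₃ = t := by
      have h := d₃.hx2
      rw [show n-5+2 = n-3 by omega, hma] at h
      exact Option.some_inj.mp h.symm
    have hm₂ : m₂[n-3]? = some t₃ := by
      have h := d₃.hy2
      rwa [show n-5+2 = n-3 by omega] at h
    have htwm : tw[n-3]? = some t₃ := by
      rw [pchain_out (fun p hp => ?_) hchb, hm₂]
      have hb := pchain_bounds hchb p hp
      have he : Even p := (hcond p (by rw [hab]; simp [hp])).1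
      have hpne : p ≠ n - 5 := fun e => hnb (e ▸ hp)
      right
      obtain ⟨j, hj⟩ := he
      obtain ⟨k, hk⟩ := hodd
      have hm₂len : m₂.length = n - 2 := by
        rw [moveAt_length hmv, pchain_length hcha, htslen]
      rw [hm₂len] at hb
      omega
    rw [htw3] at htwm
    have : t = t₃ := Option.some_inj.mp htwm
    exact d₃.st_ne (by rw [hs₃, this])
  -- all moves of ps are ≤ n-7
  have hdeep : ∀ p ∈ ps, p + 3 ≤ n - 3 := by
    intro p hp
    have hb := hbounds p hp
    have he : Even p := (hcond p hp).1
    have : p ≠ n - 5 := fun e => hn5 (e ▸ hp)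
    obtain ⟨j, hj⟩ := he
    obtain ⟨k, hk⟩ := hodd
    omega
  -- lift the chain
  have hlift0 : PChain M ps (ts.take (n-3)) (tw.take (n-3)) := pchain_take hdeep hch
  have hlift : PChain M ps (ts.take (n-3) ++ [s,t,s]) (tw.take (n-3) ++ [s,t,s]) :=
    pchain_appendR _ hlift0
  -- identify the endpoints
  have hts_take : ts.take (n-3) = x.take (n-3) := by
    rw [hts_def, List.take_take, min_eq_left (by omega)]
    exact take_eq_of_getElem? (fun i hi => d1.hout i (Or.inl (by omega)))
  have htw_take : tw.take (n-3) = y.take (n-3) := by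
    rw [htw_def, List.take_take, min_eq_left (by omega)]
    exact take_eq_of_getElem? (fun i hi => (d2.hout i (Or.inl (by omega))).symm)
  have hxeq : x = x.take (n-3) ++ [s,t,s] := by
    exact eq_take_append_three d1.hx0 d1.hx1 d1.hx2 (by omega)
  have hyeq : y = y.take (n-3) ++ [s,t,s] := by
    have h0 : y[n-3]? = some s := by rw [d2.hy0, ht₂]
    have h1 : y[n-3+1]? = some t := by rw [d2.hy1, hs₂]
    have h2 : y[n-3+2]? = some s := by rw [d2.hy2, ht₂]
    exact eq_take_append_three h0 h1 h2 (by omega)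
  rw [hts_take, htw_take] at hlift
  rw [← hxeq, ← htw_take, htw_take, ← hyeq] at hlift
  refine ⟨ps, hlift, ?_, ?_⟩
  · calc ps.length ≤ (diffC ts tw).card := by
          apply nodup_le_diffC hnd
          intro p hp
          simp only [diffC, Finset.mem_filter, Finset.mem_range]
          have := hbounds p hp
          exact ⟨by omega, (hcond p hp).1, (hcond p hp).2⟩
    _ ≤ ms.length := diffC_card_le_chain hmid' hmse
  · intro p hp
    exact hbounds p hp

end Stage7

section Stage8
variable {W : Type*} [Group W] {M : CoxeterMatrix B} (cs : CoxeterSystem M W)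

lemma CR {n : ℕ} (hn : 5 ≤ n) (hodd : Odd n) (IH : StmtAt cs (n-2))
    {β₀ : List B} (hβred : cs.IsReduced β₀) (hβlen : β₀.length = n)
    (hno : ∀ z, BraidEquiv M β₀ z → NoOdd M z) :
    ∀ k (ps : List ℕ) (u w : List B), ps.length ≤ k → PChain M ps u w →
      BraidEquiv M β₀ u → u[n-2]? = w[n-2]? →
      ∃ qs, PChain M qs u w ∧ (∀ p ∈ qs, p + 3 ≤ n - 2) ∧
        qs.length ≤ ps.length ∧ ((n-3) ∈ ps → qs.length + 2 ≤ ps.length) := by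
  intro k
  induction k with
  | zero =>
      intro ps u w hlen hch hu hside
      have hps : ps = [] := List.length_eq_zero_iff.mp (by omega)
      subst hps
      exact ⟨[], hch, by simp, le_refl _, by simp⟩
  | succ k ihk =>
      intro ps u w hlen hch hu hside
      by_cases hlow : ∀ p ∈ ps, p + 3 ≤ n - 2
      · exact ⟨ps, hch, hlow, le_refl _,
          fun hmem => absurd (hlow _ hmem) (by omega)⟩
      push_neg at hlow
      obtain ⟨p₀, hp₀mem, hp₀⟩ := hlow
      have hulen : u.length = n := by rw [braidEquiv_length hu, hβlen]
      have heven : ∀ p ∈ ps, Even p := pchain_even hno hu hch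
      have hbnd : ∀ p ∈ ps, p + 3 ≤ n := by
        intro p hp; have := pchain_bounds hch p hp; omega
      have hcross : ∀ p ∈ ps, ¬ (p + 3 ≤ n - 2) → p = n - 3 := by
        intro p hp hnp
        obtain ⟨j, hj⟩ := heven p hp
        obtain ⟨m, hm⟩ := hodd
        have := hbnd p hp
        omega
      have hp₀eq : p₀ = n - 3 := hcross p₀ hp₀mem (by omega)
      have hmem : (n-3) ∈ ps := hp₀eq ▸ hp₀mem
      obtain ⟨a, b, hab, hna⟩ := first_split hmem
      rw [hab] at hch
      rw [pchain_append] at hch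
      obtain ⟨X, hcha, hchb⟩ := hch
      obtain ⟨X', hmv, hchb⟩ := hchb
      have haelem : ∀ p ∈ a, p + 3 ≤ n - 2 := by
        intro p hp
        by_contra hnp
        exact hna ((hcross p (by rw [hab]; simp [hp]) hnp) ▸ hp)
      have hXequiv : BraidEquiv M β₀ X := braidEquiv_trans hu (pchain_braidEquiv hcha)
      have hXlen : X.length = n := by rw [braidEquiv_length hXequiv, hβlen]
      have hXside : X[n-2]? = u[n-2]? :=
        pchain_out (fun p hp => Or.inr (by have := haelem p hp; omega)) hcha
      obtain ⟨s, t, d⟩ := moveAt_iff.mp hmv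
      have hX'side : X'[n-2]? ≠ X[n-2]? := by
        rw [show n-2 = n-3+1 by omega, d.hy1, d.hx1]
        intro h
        exact d.st_ne (Option.some_inj.mp h.symm).symm
      -- the remaining chain b must recross
      have hmemb : (n-3) ∈ b := by
        by_contra hnb
        have hbelem : ∀ p ∈ b, p + 3 ≤ n - 2 := by
          intro p hp
          by_contra hnp
          exact hnb ((hcross p (by rw [hab]; simp [hp]) hnp) ▸ hp)
        have hwside : w[n-2]? = X'[n-2]? :=
          pchain_out (fun p hp => Or.inr (by have := hbelem p hp; omega)) hchb
        rw [hside] at hXside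
        rw [hwside] at hXside
        exact hX'side hXside.symm
      obtain ⟨c, dd, hcdd, hnc⟩ := first_split hmemb
      rw [hcdd] at hchb
      rw [pchain_append] at hchb
      obtain ⟨Y', hchc, hchd⟩ := hchb
      obtain ⟨Y, hmv2, hchd⟩ := hchd
      have hcelem : ∀ p ∈ c, p + 3 ≤ n - 2 := by
        intro p hp
        by_contra hnp
        refine hnc ((hcross p ?_ hnp) ▸ hp)
        rw [hab, hcdd]
        simp [hp]
      have hceven : ∀ p ∈ c, Even p := by
        intro p hp
        refine heven p ?_
        rw [hab, hcdd]
        simp [hp]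
      obtain ⟨qs₁, hqs₁, hqs₁len, hqs₁low⟩ :=
        SL cs hn hodd IH hβred hno hXequiv hXlen hmv hmv2 hchc hcelem hceven
      -- assemble the shorter chain
      have hch' : PChain M (a ++ (qs₁ ++ dd)) u w := by
        rw [pchain_append]
        refine ⟨X, hcha, ?_⟩
        rw [pchain_append]
        exact ⟨Y, hqs₁, hchd⟩
      have hlen' : (a ++ (qs₁ ++ dd)).length + 2 ≤ ps.length := by
        rw [hab, hcdd]
        simp only [List.length_append, List.length_cons]
        have := hqs₁len
        omega
      obtain ⟨qs, hqs, hqslow, hqslen, _⟩ :=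
        ihk (a ++ (qs₁ ++ dd)) u w (by omega) hch' hu hside
      exact ⟨qs, hqs, hqslow, by omega, fun _ => by omega⟩

end Stage8

section Stage9
variable {W : Type*} [Group W] {M : CoxeterMatrix B} (cs : CoxeterSystem M W)

lemma trunc_no_odd {β₀ x : List B} {m : ℕ}
    (hno : ∀ z, BraidEquiv M β₀ z → NoOdd M z) (hx : BraidEquiv M β₀ x) :
    ∀ z, BraidEquiv M (x.take m) z → NoOdd M z := by
  intro z hz c hc
  obtain ⟨ps', hps'⟩ := braidEquiv_pchain hz
  have hlift := pchain_appendR (x.drop m) hps'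
  rw [List.take_append_drop] at hlift
  exact hno _ (braidEquiv_trans hx (pchain_braidEquiv hlift)) c (shadow_appendR _ hc)

theorem stmt_all (hTF : TriangleFree M) : ∀ n, Odd n → StmtAt cs n := by
  intro n
  induction n using Nat.strong_induction_on with
  | _ n IHn =>
  intro hodd β₀ hβlen hβred hno u w hu hw
  have huw : BraidEquiv M u w := braidEquiv_trans (braidEquiv_symm hu) hw
  by_cases hsmall : n ≤ 2
  · have : u = w := short_equiv huw (by rw [braidEquiv_length hu, hβlen]; omega)
    exact ⟨[], this, by simp, by simp⟩
  by_cases h3 : n = 3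
  · -- words of length 3
    subst h3
    obtain ⟨ps, hch⟩ := braidEquiv_pchain huw
    have hulen : u.length = 3 := by rw [braidEquiv_length hu, hβlen]
    have hzero : ∀ p ∈ ps, p = 0 := by
      intro p hp
      have := pchain_bounds hch p hp
      omega
    have key : ∀ (qs : List ℕ) (x y : List B), PChain M qs x y → (∀ p ∈ qs, p = 0) →
        x = y ∨ BraidMoveAt M x y 0 := by
      intro qs
      induction qs with
      | nil => intro x y h _; exact Or.inl h
      | cons q qs ih =>
          intro x y h hq
          obtain ⟨z, hz, h2⟩ := h
          have hq0 : q = 0 := hq q (by simp)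
          subst hq0
          rcases ih z y h2 (fun p hp => hq p (by simp [hp])) with h | h
          · subst h; exact Or.inr hz
          · left
            exact (moveAt_deterministic h (moveAt_symm hz)).symm
    rcases key ps u w hch hzero with h | h
    · exact ⟨[], h, by simp, by simp⟩
    · refine ⟨[0], ⟨w, h, rfl⟩, by simp, ?_⟩
      intro p hp
      simp only [List.mem_singleton] at hp
      subst hp
      obtain ⟨s, t, d⟩ := moveAt_iff.mp h
      refine ⟨Even.zero, ?_⟩
      rw [d.hx1, d.hy1]
      intro hc
      exact d.st_ne (Option.some_inj.mp hc.symm)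
  -- now n ≥ 5
  have hn : 5 ≤ n := by
    rcases hodd with ⟨k, hk⟩
    omega
  have hodd' : Odd (n-2) := by
    rcases hodd with ⟨k, hk⟩
    exact ⟨k - 1, by omega⟩
  have IH : StmtAt cs (n-2) := IHn (n-2) (by omega) hodd'
  have hulen : u.length = n := by rw [braidEquiv_length hu, hβlen]
  have hwlen : w.length = n := by rw [braidEquiv_length hw, hβlen]
  -- the same-side case
  have sameSide : ∀ u w : List B, BraidEquiv M β₀ u → BraidEquiv M β₀ w →
      u[n-2]? = w[n-2]? →
      ∃ ps, PChain M ps u w ∧ ps.Nodup ∧ (∀ p ∈ ps, p + 3 ≤ n-2) ∧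
        ∀ p ∈ ps, Even p ∧ u[p+1]? ≠ w[p+1]? := by
    intro u w hu hw hside
    obtain ⟨ps0, hch0⟩ := braidEquiv_pchain (braidEquiv_trans (braidEquiv_symm hu) hw)
    obtain ⟨qs, hqs, hlow, -, -⟩ :=
      CR cs hn hodd IH hβred hβlen hno ps0.length ps0 u w le_rfl hch0 hu hside
    have hulen' : u.length = n := by rw [braidEquiv_length hu, hβlen]
    have htails : u.drop (n-2) = w.drop (n-2) :=
      pchain_drop_eq hlow hqs
    have htch : PChain M qs (u.take (n-2)) (w.take (n-2)) := pchain_take hlow hqs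
    have hured : cs.IsReduced u := braidEquiv_isReduced cs hu hβred
    obtain ⟨ps, hch, hnd, hcond⟩ := IH (u.take (n-2))
      (by simp [List.length_take]; omega) (CoxeterSystem.IsReduced.take hured (n-2))
      (trunc_no_odd hno hu) _ _ Relation.ReflTransGen.refl (pchain_braidEquiv htch)
    have hbnds : ∀ p ∈ ps, p + 3 ≤ n - 2 := by
      intro p hp
      have := pchain_bounds hch p hp
      simp [List.length_take] at this
      omega
    have hlift := pchain_appendR (u.drop (n-2)) hch
    rw [List.take_append_drop, htails, List.take_append_drop] at hlift
    refine ⟨ps, hlift, hnd, hbnds, ?_⟩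
    intro p hp
    refine ⟨(hcond p hp).1, ?_⟩
    have h2 := (hcond p hp).2
    have e1 : (u.take (n-2))[p+1]? = u[p+1]? := by
      rw [List.getElem?_take, if_pos (by have := hbnds p hp; omega)]
    have e2 : (w.take (n-2))[p+1]? = w[p+1]? := by
      rw [List.getElem?_take, if_pos (by have := hbnds p hp; omega)]
    rw [e1, e2] at h2
    exact h2
  by_cases hside : u[n-2]? = w[n-2]?
  · obtain ⟨ps, hch, hnd, _, hcond⟩ := sameSide u w hu hw hside
    exact ⟨ps, hch, hnd, hcond⟩
  -- opposite sides: build the crossing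
  have buildL : ∀ (g h : B) (u w : List B), BraidEquiv M β₀ u → BraidEquiv M β₀ w →
      M g h = 3 → u[n-3]? = some g → u[n-2]? = some h → u[n-1]? = some g →
      w[n-2]? = some g → u[n-2]? ≠ w[n-2]? →
      ∃ ps, PChain M ps u w ∧ ps.Nodup ∧ ∀ p ∈ ps, Even p ∧ u[p+1]? ≠ w[p+1]? := by
    intro g h u w hu hw hMgh h0 h1 h2 hwside hneq
    have hulen' : u.length = n := by rw [braidEquiv_length hu, hβlen]
    have h1' : u[n-3+1]? = some h := by rw [show n-3+1 = n-2 by omega]; exact h1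
    have h2' : u[n-3+2]? = some g := by rw [show n-3+2 = n-1 by omega]; exact h2
    have mv := moveAt_mk hMgh (by omega : n-3+3 ≤ u.length) h0 h1' h2'
    set uc := u.take (n-3) ++ [h, g, h] ++ u.drop (n-3+3) with huc
    obtain ⟨s', t', d'⟩ := moveAt_iff.mp mv
    have hucside : uc[n-2]? = some g := by
      have := d'.hy1
      rw [show n-3+1 = n-2 by omega] at this
      rw [this]
      have hs' : s' = g := by
        have hh := d'.hx0
        rw [h0] at hh
        exact (Option.some_inj.mp hh).symm
      rw [hs']
    have hucequiv : BraidEquiv M β₀ uc :=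
      braidEquiv_trans hu (pchain_braidEquiv (show PChain M [n-3] u uc from ⟨uc, mv, rfl⟩))
    obtain ⟨ps, hch, hnd, hbnds, hcond⟩ := sameSide uc w hucequiv hw (by rw [hucside, hwside])
    refine ⟨(n-3) :: ps, ⟨uc, mv, hch⟩, ?_, ?_⟩
    · rw [List.nodup_cons]
      exact ⟨fun hmem => by have := hbnds _ hmem; omega, hnd⟩
    · intro p hp
      rcases List.mem_cons.mp hp with hp | hp
      · subst hp
        refine ⟨?_, ?_⟩
        · obtain ⟨k, hk⟩ := hodd
          exact ⟨k - 1, by omega⟩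
        · rw [show n-3+1 = n-2 by omega]
          exact hneq
      · refine ⟨(hcond p hp).1, ?_⟩
        have h2 := (hcond p hp).2
        have : uc[p+1]? = u[p+1]? := by
          apply d'.hout
          left
          have := hbnds p hp
          omega
        rw [this] at h2
        exact h2
  -- find an anchor with a shadow at the top
  obtain ⟨ps0, hch0⟩ := braidEquiv_pchain huw
  have heven0 : ∀ p ∈ ps0, Even p := pchain_even hno hu hch0
  have hbnd0 : ∀ p ∈ ps0, p + 3 ≤ n := by
    intro p hp
    have := pchain_bounds hch0 p hp
    omega
  have hcross0 : ∀ p ∈ ps0, ¬ (p + 3 ≤ n - 2) → p = n - 3 := by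
    intro p hp hnp
    obtain ⟨j, hj⟩ := heven0 p hp
    obtain ⟨m, hm⟩ := hodd
    have := hbnd0 p hp
    omega
  have hmem0 : (n-3) ∈ ps0 := by
    by_contra hq
    have hlow : ∀ p ∈ ps0, p + 3 ≤ n - 2 := by
      intro p hp
      by_contra hnp
      exact hq ((hcross0 p hp hnp) ▸ hp)
    exact hside (pchain_out (fun p hp => Or.inr (by have := hlow p hp; omega)) hch0).symm
  obtain ⟨a0, b0, hab0, -⟩ := first_split hmem0
  rw [hab0, pchain_append] at hch0
  obtain ⟨Z, hchZ, hchZ'⟩ := hch0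
  obtain ⟨Z', hmvZ, -⟩ := hchZ'
  have hZequiv : BraidEquiv M β₀ Z := braidEquiv_trans hu (pchain_braidEquiv hchZ)
  have hZlen : Z.length = n := by rw [braidEquiv_length hZequiv, hβlen]
  have hZred : cs.IsReduced Z := braidEquiv_isReduced cs hZequiv hβred
  obtain ⟨e, f, dZ⟩ := moveAt_iff.mp hmvZ
  have hZ0 : Z[n-3]? = some e := dZ.hx0
  have hZ1 : Z[n-2]? = some f := by rw [show n-2 = n-3+1 by omega]; exact dZ.hx1
  have hZ2 : Z[n-1]? = some e := by rw [show n-1 = n-3+2 by omega]; exact dZ.hx2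
  have hMef : M e f = 3 := dZ.hM
  have hef : e ≠ f := dZ.st_ne
  obtain ⟨ρ, hρ⟩ : ∃ r, Z[n-4]? = some r := by
    have hlt : n - 4 < Z.length := by omega
    exact ⟨Z[n-4]'hlt, List.getElem?_eq_some_iff.mpr ⟨hlt, rfl⟩⟩
  have hρe : ρ ≠ e := by
    intro hc
    subst hc
    apply not_reduced_adjacent cs hZred hρ
    rw [show n-4+1 = n-3 by omega]
    exact hZ0
  have hρf : ρ ≠ f := by
    intro hc
    subst hc
    apply not_reduced_alternating cs hZred (by rw [M.symmetric]; exact hMef) hρ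
    · rw [show n-4+1 = n-3 by omega]; exact hZ0
    · rw [show n-4+2 = n-2 by omega]; exact hZ1
    · rw [show n-4+3 = n-1 by omega]; exact hZ2
  have typedAll : ∀ z, BraidEquiv M β₀ z → Typed M e f ρ n z := by
    intro z hz
    refine typed_equiv hn hodd hρe hρf hZlen
      (fun y hy => hno y (braidEquiv_trans hZequiv hy))
      (Or.inl ⟨hρ, hZ0, hZ1, hZ2⟩)
      (braidEquiv_trans (braidEquiv_symm hZequiv) hz)
  have tu := typedAll u hu
  have tw := typedAll w hw
  -- triangle-free dichotomy
  have hTFc : ¬ (M ρ e = 3 ∧ M ρ f = 3) := by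
    rintro ⟨hc1, hc2⟩
    exact hTF ρ e f ⟨Or.inr (by omega), Or.inr (by omega), Or.inr (by omega)⟩
  have e43 : n-4+1 = n-3 := by omega
  have e42 : n-4+2 = n-2 := by omega
  have e41 : n-4+3 = n-1 := by omega
  rcases tu with ⟨u4, u3, u2, u1⟩ | ⟨⟨u4, u3, u2, u1⟩, hcB⟩ | ⟨u4, u3, u2, u1⟩ |
    ⟨⟨u4, u3, u2, u1⟩, hcD⟩
  · -- u of type A : u is crossable with pattern (e, f, e)
    have hw2 : w[n-2]? = some e := by
      rcases tw with ⟨w4, w3, w2, w1⟩ | ⟨⟨w4, w3, w2, w1⟩, -⟩ | ⟨w4, w3, w2, w1⟩ |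
        ⟨⟨w4, w3, w2, w1⟩, -⟩
      · exact absurd (by rw [u2, w2]) hside
      · exact absurd (by rw [u2, w2]) hside
      · exact w2
      · exact w2
    exact buildL e f u w hu hw hMef u3 u2 u1 hw2 hside
  · -- u of type B : w must be of type C, which is crossable
    rcases tw with ⟨w4, w3, w2, w1⟩ | ⟨⟨w4, w3, w2, w1⟩, -⟩ | ⟨w4, w3, w2, w1⟩ |
      ⟨⟨w4, w3, w2, w1⟩, hcD⟩
    · exact absurd (by rw [u2, w2]) hside
    · exact absurd (by rw [u2, w2]) hside
    · -- w of type C : pattern (f, e, f)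
      obtain ⟨ps, hch, hnd, hcond⟩ := buildL f e w u hw hu (by rw [M.symmetric]; exact hMef)
        w3 w2 w1 u2 (by rw [u2, w2]; intro hc; have h' := Option.some_inj.mp hc; first | exact hef h' | exact hef h'.symm)
      refine ⟨ps.reverse, pchain_reverse hch, List.nodup_reverse.mpr hnd, ?_⟩
      intro p hp
      rw [List.mem_reverse] at hp
      exact ⟨(hcond p hp).1, (hcond p hp).2.symm⟩
    · exact absurd ⟨hcB, hcD⟩ hTFc
  · -- u of type C : u is crossable with pattern (f, e, f)
    have hw2 : w[n-2]? = some f := by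
      rcases tw with ⟨w4, w3, w2, w1⟩ | ⟨⟨w4, w3, w2, w1⟩, -⟩ | ⟨w4, w3, w2, w1⟩ |
        ⟨⟨w4, w3, w2, w1⟩, -⟩
      · exact w2
      · exact w2
      · exact absurd (by rw [u2, w2]) hside
      · exact absurd (by rw [u2, w2]) hside
    exact buildL f e u w hu hw (by rw [M.symmetric]; exact hMef) u3 u2 u1 hw2 hside
  · -- u of type D : w must be of type A
    rcases tw with ⟨w4, w3, w2, w1⟩ | ⟨⟨w4, w3, w2, w1⟩, hcB⟩ | ⟨w4, w3, w2, w1⟩ |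
      ⟨⟨w4, w3, w2, w1⟩, -⟩
    · -- w of type A : pattern (e, f, e)
      obtain ⟨ps, hch, hnd, hcond⟩ := buildL e f w u hw hu hMef
        w3 w2 w1 u2 (by rw [u2, w2]; intro hc; have h' := Option.some_inj.mp hc; first | exact hef h' | exact hef h'.symm)
      refine ⟨ps.reverse, pchain_reverse hch, List.nodup_reverse.mpr hnd, ?_⟩
      intro p hp
      rw [List.mem_reverse] at hp
      exact ⟨(hcond p hp).1, (hcond p hp).2.symm⟩
    · exact absurd ⟨hcB, hcD⟩ hTFc
    · exact absurd (by rw [u2, w2]) hside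
    · exact absurd (by rw [u2, w2]) hside

end Stage9

section Stage10
variable {W : Type*} [Group W] {M : CoxeterMatrix B} (cs : CoxeterSystem M W)

lemma classCenters_empty_of_short {α : List B} (h : α.length ≤ 2) :
    classCenters M α = ∅ := by
  ext c
  simp only [classCenters, Set.mem_setOf_eq, Set.mem_empty_iff_false, iff_false]
  rintro ⟨β, hβ, hc⟩
  rw [shadow_iff] at hc
  obtain ⟨-, y, hy⟩ := hc
  obtain ⟨s, t, d⟩ := moveAt_iff.mp hy
  have h1 := d.hp
  have hblen : β.length = α.length := braidEquiv_length hβ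
  omega

lemma card_even_set (m k : ℕ) (hm : m = 2*k+1) :
    ({c | Even c ∧ 2 ≤ c ∧ c + 1 ≤ m} : Set ℕ).ncard = k := by
  have he : {c | Even c ∧ 2 ≤ c ∧ c + 1 ≤ m} =
      ↑((Finset.range k).image (fun j => 2*j+2)) := by
    ext c
    simp only [Set.mem_setOf_eq, Finset.coe_image, Set.mem_image, Finset.mem_coe,
      Finset.mem_range]
    constructor
    · rintro ⟨⟨t, ht⟩, h2, h3⟩
      exact ⟨t - 1, by omega, by omega⟩
    · rintro ⟨j, hj, rfl⟩
      exact ⟨⟨j+1, by omega⟩, by omega, by omega⟩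
  rw [he, Set.ncard_coe_finset, Finset.card_image_of_injective _ (fun a b h => by omega),
    Finset.card_range]

lemma count_even (m k : ℕ) (hm : m = 2*k+1) :
    ∀ j, j ≤ k → Nat.count (fun c => Even c ∧ 2 ≤ c ∧ c + 1 ≤ m) (2*j+2) = j := by
  classical
  intro j
  induction j with
  | zero =>
      intro _
      rw [show 2*0+2 = 0 + 1 + 1 by ring]
      rw [Nat.count_succ, Nat.count_succ, Nat.count_zero]
      rw [if_neg (by rintro ⟨-, h, -⟩; omega), if_neg (by rintro ⟨⟨t, ht⟩, -, -⟩; omega)]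
  | succ j ih =>
      intro hj
      rw [show 2*(j+1)+2 = (2*j+2) + 1 + 1 by ring]
      rw [Nat.count_succ, Nat.count_succ, ih (by omega)]
      rw [if_pos ⟨⟨j+1, by omega⟩, by omega, by omega⟩,
        if_neg (by rintro ⟨⟨t, ht⟩, -, -⟩; omega)]

lemma nth_even (m k : ℕ) (hm : m = 2*k+1) (r : ℕ) (h1 : 1 ≤ r) (h2 : r ≤ k) :
    Nat.nth (fun c => Even c ∧ 2 ≤ c ∧ c + 1 ≤ m) (r - 1) = 2*r := by
  classical
  have hP : (fun c => Even c ∧ 2 ≤ c ∧ c + 1 ≤ m) (2*r) :=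
    ⟨⟨r, by omega⟩, by omega, by omega⟩
  have hcnt : Nat.count (fun c => Even c ∧ 2 ≤ c ∧ c + 1 ≤ m) (2*r) = r - 1 := by
    have := count_even m k hm (r-1) (by omega)
    rwa [show 2*(r-1)+2 = 2*r by omega] at this
  have := Nat.nth_count (p := fun c => Even c ∧ 2 ≤ c ∧ c + 1 ≤ m) hP
  rwa [hcnt] at this

end Stage10

section Stage11
variable {W : Type*} [Group W] {M : CoxeterMatrix B} (cs : CoxeterSystem M W)

lemma walk_to_pchain {α : List B} {a b : braidClass M α} (w : (braidGraph M α).Walk a b) :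
    ∃ ps, PChain M ps a.1 b.1 ∧ ps.length = w.length := by
  induction w with
  | nil => exact ⟨[], rfl, rfl⟩
  | cons h p ih =>
      obtain ⟨ps, hps, hlen⟩ := ih
      rw [braidGraph, SimpleGraph.fromRel_adj] at h
      obtain ⟨hne, hmv | hmv⟩ := h
      · obtain ⟨q, hq⟩ := hmv
        exact ⟨q :: ps, ⟨_, hq, hps⟩, by simp [hlen]⟩
      · obtain ⟨q, hq⟩ := hmv
        exact ⟨q :: ps, ⟨_, moveAt_symm hq, hps⟩, by simp [hlen]⟩

lemma pchain_to_walk {α : List B} {a b : braidClass M α} {ps : List ℕ}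
    (h : PChain M ps a.1 b.1) :
    ∃ w : (braidGraph M α).Walk a b, w.length = ps.length := by
  induction ps generalizing a with
  | nil =>
      have : a = b := Subtype.ext h
      subst this
      exact ⟨.nil, rfl⟩
  | cons q ps ih =>
      obtain ⟨z, hz, h2⟩ := h
      have hzc : z ∈ braidClass M α :=
        braidEquiv_trans a.2 (pchain_braidEquiv (show PChain M [q] a.1 z from ⟨z, hz, rfl⟩))
      obtain ⟨w, hw⟩ := ih (a := ⟨z, hzc⟩) h2
      have hadj : (braidGraph M α).Adj a ⟨z, hzc⟩ := by
        rw [braidGraph, SimpleGraph.fromRel_adj]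
        exact ⟨fun e => moveAt_ne hz (congrArg Subtype.val e), Or.inl ⟨q, hz⟩⟩
      exact ⟨.cons hadj w, by simp [hw]⟩

lemma convex_side {α : List B} {n : ℕ} (hn : 5 ≤ n) (hodd : Odd n)
    (hαlen : α.length = n) (hαred : cs.IsReduced α)
    (hno : ∀ z, BraidEquiv M α z → NoOdd M z)
    (hTF : TriangleFree M) (o : Option B) :
    GraphConvex (braidGraph M α) {y | y.1[n-2]? = o} := by
  classical
  intro u hu v hv p hgeo x hx
  simp only [Set.mem_setOf_eq] at hu hv ⊢
  by_contra hxne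
  have hodd' : Odd (n-2) := by
    rcases hodd with ⟨k, hk⟩
    exact ⟨k-1, by omega⟩
  have hsplit := p.take_spec hx
  obtain ⟨ps₁, hc1, hl1⟩ := walk_to_pchain (p.takeUntil x hx)
  obtain ⟨ps₂, hc2, hl2⟩ := walk_to_pchain (p.dropUntil x hx)
  have hlen_add : ps₁.length + ps₂.length = p.length := by
    rw [hl1, hl2, ← SimpleGraph.Walk.length_append, hsplit]
  have hch : PChain M (ps₁ ++ ps₂) u.1 v.1 := pchain_append.mpr ⟨x.1, hc1, hc2⟩
  have huc : BraidEquiv M α u.1 := u.2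
  have hulen : u.1.length = n := by rw [braidEquiv_length huc, hαlen]
  have heven : ∀ q ∈ ps₁ ++ ps₂, Even q := pchain_even hno huc hch
  have hbnd : ∀ q ∈ ps₁ ++ ps₂, q + 3 ≤ n := by
    intro q hq
    have := pchain_bounds hch q hq
    omega
  have hcross : ∀ q ∈ ps₁ ++ ps₂, q ≠ n - 3 → q + 3 ≤ n - 2 := by
    intro q hq hne
    obtain ⟨j, hj⟩ := heven q hq
    obtain ⟨m', hm'⟩ := hodd
    have := hbnd q hq
    omega
  have hmem : (n-3) ∈ ps₁ ++ ps₂ := by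
    by_contra hq
    have hxside : x.1[n-2]? = u.1[n-2]? := by
      apply pchain_out (fun q hq' => ?_) hc1
      have hq'' : q ∈ ps₁ ++ ps₂ := by simp [hq']
      have := hcross q hq'' (fun e => hq (e ▸ hq''))
      right
      omega
    rw [hu] at hxside
    exact hxne hxside
  obtain ⟨qs, hqs, -, -, hstrict⟩ :=
    CR cs hn hodd (stmt_all cs hTF (n-2) hodd') hαred hαlen hno
      (ps₁ ++ ps₂).length (ps₁ ++ ps₂) u.1 v.1 le_rfl hch huc (by rw [hu, hv])
  have hs := hstrict hmem
  obtain ⟨wq, hwq⟩ := pchain_to_walk (a := u) (b := v) hqs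
  have hd := SimpleGraph.dist_le wq
  rw [hwq] at hd
  rw [hgeo] at *
  simp only [List.length_append] at hs
  omega

end Stage11

theorem sigbar_last_convex_of_link
    {B W : Type*} [Group W] (M : CoxeterMatrix B) (cs : CoxeterSystem M W)
    (hM : TypeLambda M) (α : List B) (hα : cs.IsReduced α)
    (hlink : IsLink M α) (hr : 2 ≤ braidDim M α)
    (σ : List B) (hσ : BraidEquiv M α σ)
    (h1 : ShadowCenter M σ (2 * braidDim M α - 2))
    (h2 : ShadowCenter M σ (2 * braidDim M α)) :
    GraphConvex (braidGraph M α) (sigbar M α σ (braidDim M α)) ∧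
    ∀ τ : List B, EdgeLabeled M α σ τ (braidDim M α) →
      GraphConvex (braidGraph M α) (sigbar M α τ (braidDim M α)) := by
  obtain ⟨hSL, hTF⟩ := hM
  -- exclude the length-one case
  have hlink2 : Odd α.length ∧
      classCenters M α = {c | Even c ∧ 2 ≤ c ∧ c + 1 ≤ α.length} := by
    rcases hlink.2 with h1' | h2'
    · exfalso
      have he := classCenters_empty_of_short (M := M) (α := α) (by omega)
      have : braidDim M α = 0 := by
        rw [braidDim, he]
        simp
      omega
    · exact h2'
  obtain ⟨hodd, hE⟩ := hlink2
  obtain ⟨k, hk⟩ := hodd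
  have hdim : braidDim M α = k := by
    rw [braidDim, hE]
    exact card_even_set α.length k hk
  set r := braidDim M α with hrdef
  set n := α.length with hndef
  have hn2r : n = 2*r + 1 := by omega
  have hn : 5 ≤ n := by omega
  have hnodd : Odd n := ⟨k, hk⟩
  have hno : ∀ z, BraidEquiv M α z → NoOdd M z := by
    intro z hz c hc
    have hcc : c ∈ classCenters M α := ⟨z, hz, hc⟩
    rw [hE] at hcc
    exact hcc.1
  have hnth : nthCenter M α r = 2*r := by
    rw [nthCenter, hE]
    exact nth_even n k hk r (by omega) (by omega)
  have hsig : ∀ x : List B, sig M α x r = x[n-2]? := by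
    intro x
    rw [sig, hnth]
    congr 1
    omega
  constructor
  · have hset : sigbar M α σ r = {y : braidClass M α | y.1[n-2]? = σ[n-2]?} := by
      ext z
      simp only [sigbar, Set.mem_setOf_eq]
      rw [hsig, hsig]
    rw [hset]
    exact convex_side cs hn hnodd rfl hα hno hTF _
  · intro τ hτ
    have hset : sigbar M α τ r = {y : braidClass M α | y.1[n-2]? = τ[n-2]?} := by
      ext z
      simp only [sigbar, Set.mem_setOf_eq]
      rw [hsig, hsig]
    rw [hset]
    exact convex_side cs hn hnodd rfl hα hno hTF _

end Braid
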